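/- Suppose n, m are integers with 1 ≤ m < n, and q is a prime power, with n + q → ∞. Let X be the random subset of F_q^n in which each point is included independently with probability θ. Then, for any integer ℓ ≤ q^m with ℓ = ω((n−m)·m·log q), the event Γ that there exists an ℓ-rich m-flat with respect to X has sharp threshold ℓ·q^{−m}; that is, for every fixed ε > 0, Pr[Γ] → 0 whenever θ ≤ (1−ε)·ℓ·q^{−m} and Pr[Γ] → 1 whenever θ ≥ (1+ε)·ℓ·q^{−m}. -/

import Mathlib

open Filter Asymptotics

noncomputable def prRandomSubset {α : Type*} (U : Finset α) (θ : ℝ)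
    (E : Finset α → Prop) : ℝ :=
  ∑ A ∈ U.powerset,
    @ite ℝ (E A) (Classical.propDecidable _)
      (θ ^ A.card * (1 - θ) ^ (U.card - A.card)) 0

def IsFlat (K : Type*) {V : Type*} [Field K] [AddCommGroup V] [Module K V]
    (m : ℕ) (S : Set V) : Prop :=
  ∃ W : Submodule K V, Module.finrank K W = m ∧ ∃ v : V, S = (v + ·) '' (W : Set V)

def ExistsRichFlat (K : Type*) {V : Type*} [Field K] [AddCommGroup V] [Module K V]
    (m ℓ : ℕ) (A : Finset V) : Prop :=
  ∃ S : Set V, IsFlat K m S ∧ ℓ ≤ (S ∩ (A : Set V)).ncard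

set_option linter.unusedSectionVars false

section Aux
section ProbLemmas

variable {α : Type*} [DecidableEq α] {U : Finset α} {θ : ℝ} (h0 : 0 ≤ θ) (h1 : θ ≤ 1)

include h0 h1 in
lemma weight_nonneg (a b : ℕ) : 0 ≤ θ ^ a * (1 - θ) ^ b := by
  have h2 : (0:ℝ) ≤ 1 - θ := by linarith
  positivity

include h0 h1 in
lemma pr_nonneg (E : Finset α → Prop) : 0 ≤ prRandomSubset U θ E := by
  refine Finset.sum_nonneg fun A _ => ?_
  split
  · exact weight_nonneg h0 h1 _ _
  · exact le_refl _

include h0 h1 in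
lemma pr_mono {E E' : Finset α → Prop} (h : ∀ A, E A → E' A) :
    prRandomSubset U θ E ≤ prRandomSubset U θ E' := by
  refine Finset.sum_le_sum fun A _ => ?_
  split
  · next hE =>
      rw [if_pos (h A hE)]
  · split
    · exact weight_nonneg h0 h1 _ _
    · exact le_refl _

lemma pr_mgf (T : Finset α) (hT : T ⊆ U) (x : ℝ) :
    ∑ A ∈ U.powerset, θ ^ A.card * (1 - θ) ^ (U.card - A.card) * x ^ (A ∩ T).card
      = (θ * x + (1 - θ)) ^ T.card := by
  classical
  have key := Finset.prod_add (fun i => if i ∈ T then θ * x else θ) (fun _ => (1 - θ)) U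
  have lhs : ∏ i ∈ U, ((if i ∈ T then θ * x else θ) + (1 - θ))
      = (θ * x + (1 - θ)) ^ T.card := by
    have : ∀ i ∈ U, ((if i ∈ T then θ * x else θ) + (1 - θ))
        = (if i ∈ T then (θ * x + (1 - θ)) else 1) := by
      intro i _; split <;> ring
    rw [Finset.prod_congr rfl this, Finset.prod_ite_mem, Finset.prod_const,
      Finset.inter_eq_right.mpr hT]
  rw [lhs] at key
  rw [key]
  refine Finset.sum_congr rfl fun A hA => ?_
  have hAU : A ⊆ U := Finset.mem_powerset.mp hA
  have h1 : ∏ i ∈ U \ A, (1 - θ) = (1 - θ) ^ (U.card - A.card) := by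
    rw [Finset.prod_const, Finset.card_sdiff_of_subset hAU]
  have hk : (A ∩ T).card ≤ A.card := Finset.card_le_card Finset.inter_subset_left
  have h2 : ∏ i ∈ A, (if i ∈ T then θ * x else θ) = θ ^ A.card * x ^ (A ∩ T).card := by
    rw [Finset.prod_ite, Finset.prod_const, Finset.prod_const, Finset.filter_mem_eq_inter]
    have hc : (A.filter (fun i => ¬ i ∈ T)).card = A.card - (A ∩ T).card := by
      have := Finset.card_filter_add_card_filter_not (s := A) (p := (· ∈ T))
      rw [Finset.filter_mem_eq_inter] at this
      omega
    rw [hc, mul_pow]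
    rw [show θ ^ A.card = θ ^ (A ∩ T).card * θ ^ (A.card - (A ∩ T).card) by
      rw [← pow_add]; congr 1; omega]
    ring
  rw [h1, h2]; ring

lemma pr_total : ∑ A ∈ U.powerset, θ ^ A.card * (1 - θ) ^ (U.card - A.card) = 1 := by
  have := pr_mgf (θ := θ) (∅ : Finset α) (Finset.empty_subset U) 1
  simpa using this

include h0 h1 in
lemma pr_le_one (E : Finset α → Prop) : prRandomSubset U θ E ≤ 1 := by
  rw [← pr_total (U := U) (θ := θ)]
  refine Finset.sum_le_sum fun A _ => ?_
  split
  · exact le_refl _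
  · exact weight_nonneg h0 h1 _ _

lemma pr_add_compl (E : Finset α → Prop) :
    prRandomSubset U θ E + prRandomSubset U θ (fun A => ¬ E A) = 1 := by
  rw [← pr_total (U := U) (θ := θ), prRandomSubset, prRandomSubset, ← Finset.sum_add_distrib]
  refine Finset.sum_congr rfl fun A _ => ?_
  by_cases h : E A
  · rw [if_pos h, if_neg (not_not.mpr h), add_zero]
  · rw [if_neg h, if_pos h, zero_add]

include h0 h1 in
lemma pr_upper_tail (T : Finset α) (hT : T ⊆ U) {x : ℝ} (hx : 1 ≤ x) (ℓ : ℕ) :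
    prRandomSubset U θ (fun A => ℓ ≤ (T ∩ A).card) ≤
      x⁻¹ ^ ℓ * (θ * x + (1 - θ)) ^ T.card := by
  rw [← pr_mgf T hT x, Finset.mul_sum]
  refine Finset.sum_le_sum fun A hA => ?_
  have hx0 : (0:ℝ) < x := lt_of_lt_of_le one_pos hx
  have hw := weight_nonneg h0 h1 (θ := θ) A.card (U.card - A.card)
  set w := θ ^ A.card * (1 - θ) ^ (U.card - A.card) with hwdef
  split
  · next hE =>
    have hcard : ℓ ≤ (A ∩ T).card := by rwa [Finset.inter_comm]
    have hpow : x ^ ℓ ≤ x ^ (A ∩ T).card := pow_le_pow_right₀ hx hcard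
    calc w = x⁻¹ ^ ℓ * (w * x ^ ℓ) := by rw [inv_pow]; field_simp
      _ ≤ x⁻¹ ^ ℓ * (w * x ^ (A ∩ T).card) :=
        mul_le_mul_of_nonneg_left (mul_le_mul_of_nonneg_left hpow hw) (by positivity)
  · exact mul_nonneg (by positivity) (mul_nonneg hw (by positivity))

include h0 h1 in
lemma pr_lower_tail (T : Finset α) (hT : T ⊆ U) {x : ℝ} (hx0 : 0 < x) (hx1 : x ≤ 1)
    (ℓ : ℕ) :
    prRandomSubset U θ (fun A => ¬ (ℓ ≤ (T ∩ A).card)) ≤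
      x⁻¹ ^ (ℓ - 1) * (θ * x + (1 - θ)) ^ T.card := by
  rw [← pr_mgf T hT x, Finset.mul_sum]
  refine Finset.sum_le_sum fun A hA => ?_
  have hw := weight_nonneg h0 h1 (θ := θ) A.card (U.card - A.card)
  set w := θ ^ A.card * (1 - θ) ^ (U.card - A.card) with hwdef
  split
  · next hE =>
    have hcard : (A ∩ T).card ≤ ℓ - 1 := by rw [Finset.inter_comm]; omega
    have hpow : x ^ (ℓ - 1) ≤ x ^ (A ∩ T).card := pow_le_pow_of_le_one hx0.le hx1 hcard
    calc w = x⁻¹ ^ (ℓ - 1) * (w * x ^ (ℓ - 1)) := by rw [inv_pow]; field_simp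
      _ ≤ x⁻¹ ^ (ℓ - 1) * (w * x ^ (A ∩ T).card) :=
        mul_le_mul_of_nonneg_left (mul_le_mul_of_nonneg_left hpow hw) (by positivity)
  · exact mul_nonneg (by positivity) (mul_nonneg hw (by positivity))

include h0 h1 in
lemma pr_union {ι : Type*} (J : Finset ι) (Ev : ι → Finset α → Prop) :
    prRandomSubset U θ (fun A => ∃ j ∈ J, Ev j A) ≤
      ∑ j ∈ J, prRandomSubset U θ (Ev j) := by
  unfold prRandomSubset
  rw [Finset.sum_comm]
  refine Finset.sum_le_sum fun A hA => ?_
  have hw := weight_nonneg h0 h1 (θ := θ) A.card (U.card - A.card)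
  split
  · next hE =>
    obtain ⟨j0, hj0, hEj⟩ := hE
    refine le_trans ?_ (Finset.single_le_sum
      (f := fun j => @ite ℝ (Ev j A) (Classical.propDecidable _)
        (θ ^ A.card * (1 - θ) ^ (U.card - A.card)) 0)
      (fun j _ => ?_) hj0)
    · exact le_of_eq (if_pos hEj).symm
    · by_cases h : Ev j A
      · simpa [h] using hw
      · simp [h]
  · refine Finset.sum_nonneg fun j _ => ?_
    split
    · exact hw
    · exact le_refl 0

end ProbLemmas

section Flats

open Module Finset

variable {K V : Type*} [Field K] [AddCommGroup V] [Module K V] [Fintype K] [Fintype V]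

variable (K)

noncomputable def flatFinset {m : ℕ} (b : Fin m → V) (v : V) : Finset V :=
  (Set.toFinite ((v + ·) '' ((Submodule.span K (Set.range b)) : Set V))).toFinset

open scoped Classical in
noncomputable def linIndepPairs (m : ℕ) : Finset ((Fin m → V) × V) :=
  Finset.univ.filter (fun bv => LinearIndependent K bv.1)

open scoped Classical in
noncomputable def flatsFinset (m : ℕ) : Finset (Finset V) :=
  (linIndepPairs K (V := V) m).image (fun bv => flatFinset K bv.1 bv.2)

variable {K}

lemma flatFinset_coe {m : ℕ} (b : Fin m → V) (v : V) :
    (flatFinset K b v : Set V) = (v + ·) '' ((Submodule.span K (Set.range b)) : Set V) :=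
  Set.Finite.coe_toFinset _

lemma card_coset (W : Submodule K V) (v : V) :
    (Set.toFinite ((v + ·) '' (W : Set V))).toFinset.card = Nat.card W := by
  rw [← Set.ncard_eq_toFinset_card _ (Set.toFinite _),
    Set.ncard_image_of_injective _ (add_right_injective v), ← Nat.card_coe_set_eq]
  rfl

lemma card_submodule (W : Submodule K V) : Nat.card W = Fintype.card K ^ (finrank K W) := by
  have := Fintype.ofFinite ↥W
  rw [Nat.card_eq_fintype_card, card_eq_pow_finrank (K := K)]

lemma flatFinset_card {m : ℕ} {b : Fin m → V} (hb : LinearIndependent K b) (v : V) :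
    (flatFinset K b v).card = Fintype.card K ^ m := by
  rw [flatFinset, card_coset, card_submodule, finrank_span_eq_card hb, Fintype.card_fin]

lemma coset_eq {W : Submodule K V} {v₀ v : V} (hv : v ∈ (v₀ + ·) '' (W : Set V)) :
    (v + ·) '' (W : Set V) = (v₀ + ·) '' (W : Set V) := by
  obtain ⟨w, hw, rfl⟩ := hv
  ext x
  constructor
  · rintro ⟨w', hw', rfl⟩
    exact ⟨w + w', W.add_mem hw hw', by dsimp; abel⟩
  · rintro ⟨w'', hw'', rfl⟩
    exact ⟨w'' - w, W.sub_mem hw'' hw, by dsimp; abel⟩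

lemma exists_flat_basis {W : Submodule K V} {m : ℕ} (hW : finrank K ↥W = m) :
    ∃ b : Fin m → V, LinearIndependent K b ∧ Submodule.span K (Set.range b) = W := by
  let B := Module.finBasisOfFinrankEq K W hW
  refine ⟨fun j => (B j : V), ?_, ?_⟩
  · exact B.linearIndependent.map' W.subtype W.ker_subtype
  · have h : Set.range (fun j => (B j : V)) = W.subtype '' Set.range B := by
      rw [← Set.range_comp]; rfl
    rw [h, Submodule.span_image, B.span_eq, Submodule.map_subtype_top]

lemma exists_submodule_finrank (m : ℕ) (hm : m ≤ finrank K V) :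
    ∃ W : Submodule K V, finrank K ↥W = m := by
  have : FiniteDimensional K V := Module.Finite.of_finite
  let B := Module.finBasis K V
  let b : Fin m → V := fun j => B (Fin.castLE hm j)
  have hb : LinearIndependent K b :=
    B.linearIndependent.comp _ (Fin.castLE_injective hm)
  exact ⟨Submodule.span K (Set.range b), by
    rw [finrank_span_eq_card hb, Fintype.card_fin]⟩


lemma mem_flatsFinset {m : ℕ} {T : Finset V} :
    T ∈ flatsFinset K (V := V) m ↔
      ∃ bv : (Fin m → V) × V, LinearIndependent K bv.1 ∧ flatFinset K bv.1 bv.2 = T := by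
  classical
  rw [flatsFinset]
  constructor
  · intro h
    obtain ⟨bv, hD, rfl⟩ := Finset.mem_image.mp h
    rw [linIndepPairs] at hD
    exact ⟨bv, (Finset.mem_filter.mp hD).2, rfl⟩
  · rintro ⟨bv, hLI, rfl⟩
    refine Finset.mem_image.mpr ⟨bv, ?_, rfl⟩
    rw [linIndepPairs]
    exact Finset.mem_filter.mpr ⟨Finset.mem_univ _, hLI⟩

end Flats

section Count

open Module Finset

variable {K V : Type*} [Field K] [AddCommGroup V] [Module K V] [Fintype K] [Fintype V]

lemma linIndep_tuples_card (W : Submodule K V) {m : ℕ} (hW : finrank K ↥W = m) :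
    (Fintype.card K ^ m - Fintype.card K ^ (m - 1)) ^ m ≤
      Nat.card { s : Fin m → ↥W // LinearIndependent K s } := by
  rw [card_linearIndependent (K := K) (V := ↥W) (by rw [hW])]
  · calc (Fintype.card K ^ m - Fintype.card K ^ (m - 1)) ^ m
        = (Fintype.card K ^ m - Fintype.card K ^ (m - 1)) ^ (univ : Finset (Fin m)).card := by
          rw [card_univ, Fintype.card_fin]
      _ ≤ ∏ i : Fin m, (Fintype.card K ^ finrank K ↥W - Fintype.card K ^ i.val) := by
          refine Finset.pow_card_le_prod _ _ _ fun i _ => ?_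
          rw [hW]
          refine Nat.sub_le_sub_left ?_ _
          exact Nat.pow_le_pow_right Fintype.card_pos (by omega)

lemma flatsFinset_card_mul_le (m : ℕ) :
    (flatsFinset K (V := V) m).card *
      ((Fintype.card K ^ m - Fintype.card K ^ (m - 1)) ^ m * Fintype.card K ^ m)
      ≤ Fintype.card V ^ (m + 1) := by
  classical
  set q := Fintype.card K with hq
  set D := linIndepPairs K (V := V) m with hDdef
  have hmap : ∀ bv ∈ D, flatFinset K bv.1 bv.2 ∈ flatsFinset K (V := V) m := by
    intro bv h
    rw [flatsFinset]
    exact Finset.mem_image_of_mem _ h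
  have hsum := Finset.card_eq_sum_card_fiberwise hmap
  have hfiber : ∀ T ∈ flatsFinset K (V := V) m,
      (q ^ m - q ^ (m - 1)) ^ m * q ^ m ≤
        (D.filter (fun bv => flatFinset K bv.1 bv.2 = T)).card := by
    intro T hT
    rw [flatsFinset] at hT
    obtain ⟨bv₀, hbv₀D, hbv₀⟩ := Finset.mem_image.mp hT
    obtain ⟨b₀, v₀⟩ := bv₀
    have hb₀ : LinearIndependent K b₀ := by
      have h := Finset.mem_filter.mp (by rw [linIndepPairs] at hbv₀D; exact hbv₀D)
      exact h.2
    set W₀ := Submodule.span K (Set.range b₀) with hW₀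
    have hfinW₀ : finrank K ↥W₀ = m := by
      rw [hW₀, finrank_span_eq_card hb₀, Fintype.card_fin]
    set Gb : Finset (Fin m → V) :=
      univ.filter (fun b => LinearIndependent K b ∧ ∀ j, b j ∈ W₀) with hGb
    have hsub : Gb ×ˢ T ⊆ D.filter (fun bv => flatFinset K bv.1 bv.2 = T) := by
      rintro ⟨b, v⟩ hmem
      rw [Finset.mem_product] at hmem
      obtain ⟨hbG, hvT⟩ := hmem
      rw [hGb, Finset.mem_filter] at hbG
      obtain ⟨-, hbLI, hbW⟩ := hbG
      have hspan : Submodule.span K (Set.range b) = W₀ := by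
        have hle : Submodule.span K (Set.range b) ≤ W₀ := by
          rw [Submodule.span_le]; rintro _ ⟨j, rfl⟩; exact hbW j
        refine Submodule.eq_of_le_of_finrank_le hle ?_
        rw [hfinW₀, finrank_span_eq_card hbLI, Fintype.card_fin]
      have hflat : flatFinset K b v = T := by
        rw [← hbv₀]
        have hvmem : v ∈ (v₀ + ·) '' (W₀ : Set V) := by
          rw [← hbv₀] at hvT
          have h2 := (Set.Finite.mem_toFinset _).mp hvT
          exact h2
        apply Finset.coe_injective
        rw [flatFinset_coe, flatFinset_coe, hspan]
        exact coset_eq hvmem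
      rw [Finset.mem_filter]
      refine ⟨?_, hflat⟩
      rw [hDdef, linIndepPairs]
      exact Finset.mem_filter.mpr ⟨Finset.mem_univ _, hbLI⟩
    have hGbcard : (q ^ m - q ^ (m - 1)) ^ m ≤ Gb.card := by
      refine le_trans (linIndep_tuples_card W₀ hfinW₀) (le_of_eq ?_)
      rw [← Nat.card_eq_finsetCard]
      refine Nat.card_congr ?_
      refine
        { toFun := fun s => ⟨fun j => ((s.1 j : V)), ?_⟩
          invFun := fun b => ⟨fun j => ⟨b.1 j, ?_⟩, ?_⟩
          left_inv := ?_
          right_inv := ?_ }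
      · rw [hGb, Finset.mem_filter]
        exact ⟨Finset.mem_univ _,
          s.2.map' W₀.subtype W₀.ker_subtype, fun j => (s.1 j).2⟩
      · have hb2 : ↑b ∈ Finset.filter
            (fun b => LinearIndependent K b ∧ ∀ (j : Fin m), b j ∈ W₀) univ := b.2
        exact (Finset.mem_filter.mp hb2).2.2 j
      · have hb2 : ↑b ∈ Finset.filter
            (fun b => LinearIndependent K b ∧ ∀ (j : Fin m), b j ∈ W₀) univ := b.2
        exact LinearIndependent.of_comp W₀.subtype (Finset.mem_filter.mp hb2).2.1
      · intro s; apply Subtype.ext; funext j; apply Subtype.ext; rfl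
      · intro b; apply Subtype.ext; funext j; rfl
    have hTcard : T.card = q ^ m := by rw [← hbv₀]; exact flatFinset_card hb₀ v₀
    calc (q ^ m - q ^ (m - 1)) ^ m * q ^ m
        ≤ Gb.card * T.card := Nat.mul_le_mul hGbcard (le_of_eq hTcard.symm)
      _ = (Gb ×ˢ T).card := (Finset.card_product _ _).symm
      _ ≤ _ := Finset.card_le_card hsub
  calc (flatsFinset K (V := V) m).card * ((q ^ m - q ^ (m - 1)) ^ m * q ^ m)
      = ∑ _T ∈ flatsFinset K (V := V) m, ((q ^ m - q ^ (m - 1)) ^ m * q ^ m) := by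
        rw [Finset.sum_const, smul_eq_mul]
    _ ≤ ∑ T ∈ flatsFinset K (V := V) m,
          (D.filter (fun bv => flatFinset K bv.1 bv.2 = T)).card :=
        Finset.sum_le_sum hfiber
    _ = D.card := hsum.symm
    _ ≤ (Finset.univ : Finset ((Fin m → V) × V)).card := by
        rw [hDdef, linIndepPairs]
        exact Finset.card_le_card (Finset.filter_subset _ _)
    _ = Fintype.card V ^ (m + 1) := by
        rw [Finset.card_univ, Fintype.card_prod, Fintype.card_fun, Fintype.card_fin, pow_succ]

end Count

section Bridge

open Module Finset

variable {K V : Type*} [Field K] [AddCommGroup V] [Module K V] [Fintype K] [Fintype V]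
  [DecidableEq V]

lemma flatsFinset_mem_card {m : ℕ} {T : Finset V} (hT : T ∈ flatsFinset K (V := V) m) :
    T.card = Fintype.card K ^ m := by
  obtain ⟨⟨b, v⟩, hLI, rfl⟩ := mem_flatsFinset.mp hT
  exact flatFinset_card hLI v

lemma existsRichFlat_imp {m ℓ : ℕ} {A : Finset V} (h : ExistsRichFlat K m ℓ A) :
    ∃ T ∈ flatsFinset K (V := V) m, ℓ ≤ (T ∩ A).card := by
  obtain ⟨S, ⟨W, hW, v, rfl⟩, hS⟩ := h
  obtain ⟨b, hbLI, hbspan⟩ := exists_flat_basis hW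
  refine ⟨flatFinset K b v, mem_flatsFinset.mpr ⟨(b, v), hbLI, rfl⟩, ?_⟩
  · calc ℓ ≤ ((v + ·) '' (W : Set V) ∩ (A : Set V)).ncard := hS
      _ = ((flatFinset K b v : Set V) ∩ (A : Set V)).ncard := by
          rw [flatFinset_coe, hbspan]
      _ = ((flatFinset K b v) ∩ A).card := by
          rw [← Finset.coe_inter, Set.ncard_coe_finset]

lemma exists_good_flat {m : ℕ} (hm : m ≤ finrank K V) :
    ∃ T : Finset V, T.card = Fintype.card K ^ m ∧
      ∀ (ℓ : ℕ) (A : Finset V), ℓ ≤ (T ∩ A).card → ExistsRichFlat K m ℓ A := by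
  obtain ⟨W, hW⟩ := exists_submodule_finrank (K := K) (V := V) m hm
  obtain ⟨b, hbLI, hbspan⟩ := exists_flat_basis hW
  refine ⟨flatFinset K b 0, flatFinset_card hbLI 0, fun ℓ A hA => ?_⟩
  refine ⟨(flatFinset K b 0 : Set V), ⟨W, hW, 0, ?_⟩, ?_⟩
  · rw [flatFinset_coe, hbspan]
  · calc ℓ ≤ ((flatFinset K b 0) ∩ A).card := hA
      _ = ((flatFinset K b 0 : Set V) ∩ (A : Set V)).ncard := by
          rw [← Finset.coe_inter, Set.ncard_coe_finset]

end Bridge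

lemma pow_eq_exp {a : ℝ} (ha : 0 < a) (n : ℕ) : a ^ n = Real.exp (n * Real.log a) := by
  rw [← Real.log_pow, Real.exp_log (pow_pos ha n)]

section MainBounds

open Module Finset Real

variable {K V : Type*} [Field K] [AddCommGroup V] [Module K V] [Fintype K] [Fintype V]
  [DecidableEq V]

lemma upper_bound_main {m ℓ : ℕ} {θ ε' : ℝ}
    (h0 : 0 ≤ θ) (h1 : θ ≤ 1) (hε1 : 0 < ε') (hε2 : ε' ≤ 1/2)
    (hm1 : 1 ≤ m) (hmN : m ≤ Module.finrank K V) (hq2 : 2 ≤ Fintype.card K)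
    (hθ : θ * (Fintype.card K : ℝ) ^ m ≤ (1 - ε') * ℓ) :
    prRandomSubset (Finset.univ : Finset V) θ (fun A => ExistsRichFlat K m ℓ A) ≤
      Real.exp ((m : ℝ) * Real.log 2
        + (((m + 1) * (Module.finrank K V - m) : ℕ) : ℝ) * Real.log (Fintype.card K)
        + (ℓ : ℝ) * Real.log (1 - ε') + ε' * ℓ) := by
  set q := Fintype.card K with hqdef
  have hqpos : 0 < q := by omega
  have h1ε : (0:ℝ) < 1 - ε' := by linarith
  set x : ℝ := (1 - ε')⁻¹ with hx
  have hx1 : 1 ≤ x := (one_le_inv₀ h1ε).mpr (by linarith)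
  have step1 : prRandomSubset (Finset.univ : Finset V) θ (fun A => ExistsRichFlat K m ℓ A)
      ≤ prRandomSubset (Finset.univ : Finset V) θ
        (fun A => ∃ T ∈ flatsFinset K (V := V) m, ℓ ≤ (T ∩ A).card) :=
    pr_mono h0 h1 (fun A h => existsRichFlat_imp h)
  have step2 := pr_union (U := (Finset.univ : Finset V)) h0 h1 (flatsFinset K (V := V) m)
    (fun T A => ℓ ≤ (T ∩ A).card)
  have step3 : ∀ T ∈ flatsFinset K (V := V) m,
      prRandomSubset (Finset.univ : Finset V) θ (fun A => ℓ ≤ (T ∩ A).card)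
        ≤ (1 - ε') ^ ℓ * Real.exp (ε' * ℓ) := by
    intro T hT
    refine le_trans (pr_upper_tail h0 h1 T (Finset.subset_univ T) hx1 ℓ) ?_
    rw [flatsFinset_mem_card hT, hx, inv_inv]
    refine mul_le_mul_of_nonneg_left ?_ (by positivity)
    have hbase0 : 0 ≤ θ * (1 - ε')⁻¹ + (1 - θ) :=
      add_nonneg (mul_nonneg h0 (inv_nonneg.mpr h1ε.le)) (by linarith)
    have hbase : θ * (1 - ε')⁻¹ + (1 - θ) ≤ Real.exp (θ * ((1 - ε')⁻¹ - 1)) := by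
      calc θ * (1 - ε')⁻¹ + (1 - θ) = θ * ((1 - ε')⁻¹ - 1) + 1 := by ring
        _ ≤ _ := Real.add_one_le_exp _
    calc (θ * (1 - ε')⁻¹ + (1 - θ)) ^ (q ^ m)
        ≤ (Real.exp (θ * ((1 - ε')⁻¹ - 1))) ^ (q ^ m) := pow_le_pow_left₀ hbase0 hbase _
      _ = Real.exp (((q ^ m : ℕ) : ℝ) * (θ * ((1 - ε')⁻¹ - 1))) := by
          rw [Real.exp_nat_mul]
      _ ≤ Real.exp (ε' * ℓ) := by
          apply Real.exp_le_exp.mpr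
          have hx0 : (0:ℝ) ≤ (1 - ε')⁻¹ - 1 := by linarith
          have h2 : θ * ((q : ℝ) ^ m) * ((1 - ε')⁻¹ - 1)
              ≤ (1 - ε') * ℓ * ((1 - ε')⁻¹ - 1) := mul_le_mul_of_nonneg_right hθ hx0
          have h4 : (1 - ε') * ℓ * ((1 - ε')⁻¹ - 1) = ε' * ℓ := by
            field_simp
            ring
          have h5 : ((q ^ m : ℕ) : ℝ) * (θ * ((1 - ε')⁻¹ - 1))
              = θ * ((q : ℝ) ^ m) * ((1 - ε')⁻¹ - 1) := by
            push_cast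
            ring
          rw [h5, ← h4]
          exact h2
  have step4 : ∑ T ∈ flatsFinset K (V := V) m,
      prRandomSubset (Finset.univ : Finset V) θ (fun A => ℓ ≤ (T ∩ A).card)
        ≤ ((flatsFinset K (V := V) m).card : ℝ) * ((1 - ε') ^ ℓ * Real.exp (ε' * ℓ)) := by
    have := Finset.sum_le_card_nsmul (flatsFinset K (V := V) m) _ _ step3
    rwa [nsmul_eq_mul] at this
  -- counting bound in ℕ
  have hCnat : (flatsFinset K (V := V) m).card ≤ 2 ^ m * q ^ ((m + 1) * (Module.finrank K V - m)) := by
    have hA := flatsFinset_card_mul_le (K := K) (V := V) m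
    have hcV : Fintype.card V = q ^ (Module.finrank K V) := card_eq_pow_finrank (K := K)
    rw [hcV] at hA
    have h2q : q ^ m ≤ 2 * (q ^ m - q ^ (m - 1)) := by
      have hmul : 2 * q ^ (m - 1) ≤ q ^ m := by
        calc 2 * q ^ (m - 1) ≤ q * q ^ (m - 1) := Nat.mul_le_mul_right _ hq2
          _ = q ^ m := by rw [← pow_succ']; congr 1; omega
      have hle : q ^ (m-1) ≤ q ^ m := Nat.pow_le_pow_right hqpos (by omega)
      omega
    set C := (flatsFinset K (V := V) m).card with hC
    set N := Module.finrank K V with hN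
    have hkey : q ^ (m * (m + 1)) * C ≤ 2 ^ m * q ^ (N * (m + 1)) := by
      calc q ^ (m * (m + 1)) * C = (q ^ m) ^ m * q ^ m * C := by
            ring
        _ ≤ (2 * (q ^ m - q ^ (m - 1))) ^ m * q ^ m * C :=
            Nat.mul_le_mul_right _ (Nat.mul_le_mul_right _ (Nat.pow_le_pow_left h2q m))
        _ = 2 ^ m * (C * ((q ^ m - q ^ (m - 1)) ^ m * q ^ m)) := by
            rw [mul_pow]
            ring
        _ ≤ 2 ^ m * (q ^ N) ^ (m + 1) := Nat.mul_le_mul_left _ hA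
        _ = 2 ^ m * q ^ (N * (m + 1)) := by rw [← pow_mul]
    have hsplit : q ^ (N * (m + 1)) = q ^ ((m + 1) * (N - m)) * q ^ (m * (m + 1)) := by
      rw [← pow_add]
      congr 1
      obtain ⟨k, hk⟩ := Nat.le.dest hmN
      rw [← hk]
      simp only [Nat.add_sub_cancel_left]
      ring
    rw [hsplit] at hkey
    have hkey2 : q ^ (m * (m + 1)) * C
        ≤ q ^ (m * (m + 1)) * (2 ^ m * q ^ ((m + 1) * (N - m))) := by
      calc q ^ (m * (m + 1)) * C ≤ 2 ^ m * (q ^ ((m + 1) * (N - m)) * q ^ (m * (m + 1))) := hkey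
        _ = q ^ (m * (m + 1)) * (2 ^ m * q ^ ((m + 1) * (N - m))) := by ring
    exact Nat.le_of_mul_le_mul_left hkey2 (pow_pos hqpos _)
  have hCreal : ((flatsFinset K (V := V) m).card : ℝ)
      ≤ Real.exp ((m : ℝ) * Real.log 2
        + (((m + 1) * (Module.finrank K V - m) : ℕ) : ℝ) * Real.log q) := by
    have hcast : ((flatsFinset K (V := V) m).card : ℝ)
        ≤ (2 : ℝ) ^ m * (q : ℝ) ^ ((m + 1) * (Module.finrank K V - m)) := by
      exact_mod_cast Nat.cast_le.mpr hCnat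
    refine hcast.trans (le_of_eq ?_)
    rw [pow_eq_exp two_pos, pow_eq_exp (show (0:ℝ) < q by exact_mod_cast hqpos),
      ← Real.exp_add]
  -- assemble
  refine le_trans step1 (le_trans step2 (le_trans step4 ?_))
  calc ((flatsFinset K (V := V) m).card : ℝ) * ((1 - ε') ^ ℓ * Real.exp (ε' * ℓ))
      ≤ Real.exp ((m : ℝ) * Real.log 2
          + (((m + 1) * (Module.finrank K V - m) : ℕ) : ℝ) * Real.log q)
          * ((1 - ε') ^ ℓ * Real.exp (ε' * ℓ)) :=
        mul_le_mul_of_nonneg_right hCreal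
          (mul_nonneg (pow_nonneg h1ε.le _) (Real.exp_nonneg _))
    _ = _ := by
        rw [pow_eq_exp h1ε, ← Real.exp_add, ← Real.exp_add]
        ring_nf

lemma lower_bound_main {m ℓ : ℕ} {θ ε : ℝ}
    (h0 : 0 ≤ θ) (h1 : θ ≤ 1) (hε : 0 < ε)
    (hmN : m ≤ Module.finrank K V)
    (hθ : (1 + ε) * ℓ ≤ θ * (Fintype.card K : ℝ) ^ m) :
    1 - (1 + ε) ^ (ℓ - 1) * Real.exp (-(ε * ℓ)) ≤
      prRandomSubset (Finset.univ : Finset V) θ (fun A => ExistsRichFlat K m ℓ A) := by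
  obtain ⟨T, hTcard, hTimp⟩ := exists_good_flat (K := K) (V := V) hmN
  set x : ℝ := (1 + ε)⁻¹ with hxdef
  have hε1 : (0:ℝ) < 1 + ε := by linarith
  have hx0 : 0 < x := by positivity
  have hx1 : x ≤ 1 := inv_le_one_of_one_le₀ (by linarith)
  have hmono : prRandomSubset (Finset.univ : Finset V) θ (fun A => ℓ ≤ (T ∩ A).card)
      ≤ prRandomSubset (Finset.univ : Finset V) θ (fun A => ExistsRichFlat K m ℓ A) :=
    pr_mono h0 h1 (fun A h => hTimp ℓ A h)
  have hcompl := pr_add_compl (U := (Finset.univ : Finset V)) (θ := θ)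
    (fun A => ℓ ≤ (T ∩ A).card)
  have htail := pr_lower_tail h0 h1 T (Finset.subset_univ T) hx0 hx1 ℓ
  have hbound : x⁻¹ ^ (ℓ - 1) * (θ * x + (1 - θ)) ^ T.card
      ≤ (1 + ε) ^ (ℓ - 1) * Real.exp (-(ε * ℓ)) := by
    rw [hxdef, inv_inv, hTcard]
    refine mul_le_mul_of_nonneg_left ?_ (by positivity)
    have hbase0 : 0 ≤ θ * (1 + ε)⁻¹ + (1 - θ) :=
      add_nonneg (mul_nonneg h0 (by positivity)) (by linarith)
    have hbase : θ * (1 + ε)⁻¹ + (1 - θ) ≤ Real.exp (θ * ((1 + ε)⁻¹ - 1)) := by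
      calc θ * (1 + ε)⁻¹ + (1 - θ) = θ * ((1 + ε)⁻¹ - 1) + 1 := by ring
        _ ≤ _ := Real.add_one_le_exp _
    set q := Fintype.card K with hqdef
    calc (θ * (1 + ε)⁻¹ + (1 - θ)) ^ (q ^ m)
        ≤ (Real.exp (θ * ((1 + ε)⁻¹ - 1))) ^ (q ^ m) := pow_le_pow_left₀ hbase0 hbase _
      _ = Real.exp (((q ^ m : ℕ) : ℝ) * (θ * ((1 + ε)⁻¹ - 1))) := by
          rw [Real.exp_nat_mul]
      _ ≤ Real.exp (-(ε * ℓ)) := by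
          apply Real.exp_le_exp.mpr
          have hx2 : (0:ℝ) ≤ 1 - (1 + ε)⁻¹ := by
            have : (1 + ε)⁻¹ ≤ 1 := inv_le_one_of_one_le₀ (by linarith)
            linarith
          have h2 : (1 + ε) * ℓ * (1 - (1 + ε)⁻¹) ≤ θ * ((q : ℝ) ^ m) * (1 - (1 + ε)⁻¹) :=
            mul_le_mul_of_nonneg_right hθ hx2
          have h4 : (1 + ε) * ℓ * (1 - (1 + ε)⁻¹) = ε * ℓ := by
            field_simp
            ring
          have h5 : ((q ^ m : ℕ) : ℝ) * (θ * ((1 + ε)⁻¹ - 1))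
              = -(θ * ((q : ℝ) ^ m) * (1 - (1 + ε)⁻¹)) := by
            push_cast
            ring
          rw [h5, ← h4] at *
          linarith [h2]
  have hτ := le_trans htail hbound
  linarith [hmono, hcompl, hτ]

end MainBounds


end Aux

open Real in
theorem stmt5 (n m q ℓ : ℕ → ℕ) (F : ℕ → Type) [∀ i, Field (F i)] [∀ i, Fintype (F i)]
    (hm : ∀ i, 1 ≤ m i ∧ m i < n i)
    (hq : ∀ i, Fintype.card (F i) = q i) (hqpp : ∀ i, IsPrimePow (q i))
    (hnq : Tendsto (fun i => n i + q i) atTop atTop)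
    (hℓq : ∀ i, ℓ i ≤ q i ^ m i)
    (hℓω : (fun i => ((n i - m i : ℕ) : ℝ) * (m i : ℝ) * Real.log (q i)) =o[atTop]
      fun i => (ℓ i : ℝ))
    (ε : ℝ) (hε : 0 < ε)
    (θ : ℕ → ℝ) (hθ : ∀ i, 0 ≤ θ i ∧ θ i ≤ 1) :
    ((∀ i, θ i ≤ (1 - ε) * (ℓ i : ℝ) / (q i : ℝ) ^ m i) →
      Tendsto (fun i => prRandomSubset (Finset.univ : Finset (Fin (n i) → F i)) (θ i)
        (fun A => ExistsRichFlat (F i) (m i) (ℓ i) A)) atTop (nhds 0)) ∧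
    ((∀ i, (1 + ε) * (ℓ i : ℝ) / (q i : ℝ) ^ m i ≤ θ i) →
      Tendsto (fun i => prRandomSubset (Finset.univ : Finset (Fin (n i) → F i)) (θ i)
        (fun A => ExistsRichFlat (F i) (m i) (ℓ i) A)) atTop (nhds 1)) := by
  classical
  have hq2 : ∀ i, 2 ≤ q i := fun i => (hqpp i).two_le
  have hfinrank : ∀ i, Module.finrank (F i) (Fin (n i) → F i) = n i := fun i => by
    rw [Module.finrank_fintype_fun_eq_card, Fintype.card_fin]
  have hqposR : ∀ i, (0:ℝ) < (q i : ℝ) := fun i => by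
    have := hq2 i; positivity
  have hqmpos : ∀ i, (0:ℝ) < (q i : ℝ) ^ (m i) := fun i => pow_pos (hqposR i) _
  have hlogq : ∀ i, Real.log 2 ≤ Real.log (q i) := fun i => by
    rw [Real.log_le_log_iff two_pos (hqposR i)]
    exact_mod_cast hq2 i
  have hlog2pos : (0:ℝ) < Real.log 2 := Real.log_pos one_lt_two
  have hlogq0 : ∀ i, 0 ≤ Real.log (q i) := fun i => le_trans hlog2pos.le (hlogq i)
  have hnm1 : ∀ i, (1:ℝ) ≤ ((n i - m i : ℕ) : ℝ) := fun i => by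
    have h := (hm i).2
    have : 1 ≤ n i - m i := by omega
    exact_mod_cast this
  have hm1R : ∀ i, (1:ℝ) ≤ (m i : ℝ) := fun i => by exact_mod_cast (hm i).1
  set f : ℕ → ℝ := fun i => ((n i - m i : ℕ) : ℝ) * (m i : ℝ) * Real.log (q i) with hf
  have hflog2 : ∀ i, Real.log 2 ≤ f i := fun i => by
    calc Real.log 2 ≤ Real.log (q i) := hlogq i
      _ = 1 * (1 * Real.log (q i)) := by ring
      _ ≤ ((n i - m i : ℕ) : ℝ) * ((m i : ℝ) * Real.log (q i)) := by
          refine mul_le_mul (hnm1 i) ?_ (by positivity) (by positivity)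
          exact mul_le_mul (hm1R i) (le_refl _) (by positivity) (by linarith [hm1R i])
      _ = f i := by rw [hf]; ring
  have hℓinf : Tendsto (fun i => (ℓ i : ℝ)) atTop atTop := by
    rw [tendsto_atTop]
    intro b
    set M := max b 1 with hM
    have hM0 : (0:ℝ) < M := lt_of_lt_of_le one_pos (le_max_right _ _)
    have hc : 0 < Real.log 2 / M := div_pos hlog2pos hM0
    filter_upwards [hℓω.def hc] with i hi
    rw [Real.norm_eq_abs, Real.norm_eq_abs,
      abs_of_nonneg (le_trans hlog2pos.le (hflog2 i)),
      abs_of_nonneg (Nat.cast_nonneg (ℓ i))] at hi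
    have hMl : M ≤ (ℓ i : ℝ) := by
      by_contra hcon
      push_neg at hcon
      have h2 : Real.log 2 / M * (ℓ i : ℝ) < Real.log 2 := by
        rw [div_mul_eq_mul_div, div_lt_iff₀ hM0]
        have hl0 : (0:ℝ) ≤ (ℓ i : ℝ) := Nat.cast_nonneg _
        nlinarith
      linarith [hflog2 i]
    exact le_trans (le_max_left b 1) hMl
  constructor
  · -- upper branch
    intro hθb
    set ε' := min ε (1/2 : ℝ) with hε'
    have hε'0 : 0 < ε' := lt_min hε (by norm_num)
    have hε'2 : ε' ≤ 1/2 := min_le_right _ _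
    have hε'ε : ε' ≤ ε := min_le_left _ _
    have h1ε' : (0:ℝ) < 1 - ε' := by linarith
    have hc₁ : 0 < -(Real.log (1 - ε') + ε') := by
      have hne : (-ε' : ℝ) ≠ 0 := ne_of_lt (neg_lt_zero.mpr hε'0)
      have h := Real.add_one_lt_exp hne
      have h2 : Real.log (1 - ε') < -ε' := by
        have h3 : (1 - ε') < Real.exp (-ε') := by linarith
        calc Real.log (1 - ε') < Real.log (Real.exp (-ε')) := Real.log_lt_log h1ε' h3
          _ = -ε' := Real.log_exp _
      linarith
    set c₁ := -(Real.log (1 - ε') + ε') with hc₁def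
    set g : ℕ → ℝ := fun i => (m i : ℝ) * Real.log 2
      + (((m i + 1) * (n i - m i) : ℕ) : ℝ) * Real.log (q i)
      + (ℓ i : ℝ) * Real.log (1 - ε') + ε' * (ℓ i : ℝ) with hg
    have hPu : ∀ i, prRandomSubset (Finset.univ : Finset (Fin (n i) → F i)) (θ i)
        (fun A => ExistsRichFlat (F i) (m i) (ℓ i) A) ≤ Real.exp (g i) := by
      intro i
      have hθi : θ i * (Fintype.card (F i) : ℝ) ^ (m i) ≤ (1 - ε') * (ℓ i : ℝ) := by
        rw [hq i]
        have h1 : θ i * (q i : ℝ) ^ (m i) ≤ (1 - ε) * (ℓ i : ℝ) := by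
          have h2 := mul_le_mul_of_nonneg_right (hθb i) (hqmpos i).le
          rwa [div_mul_cancel₀ _ (ne_of_gt (hqmpos i))] at h2
        refine h1.trans (mul_le_mul_of_nonneg_right (by linarith) (Nat.cast_nonneg _))
      have hK := upper_bound_main (K := F i) (V := Fin (n i) → F i)
        (hθ i).1 (hθ i).2 hε'0 hε'2 (hm i).1
        (by rw [hfinrank i]; exact (hm i).2.le)
        (by rw [hq i]; exact hq2 i) hθi
      rw [hq i, hfinrank i] at hK
      exact hK
    have hgev : ∀ᶠ i in atTop, g i ≤ (ℓ i : ℝ) * (-(c₁/2)) := by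
      have hc6 : 0 < c₁ / 6 := by linarith
      filter_upwards [hℓω.def hc6] with i hi
      rw [Real.norm_eq_abs, Real.norm_eq_abs,
        abs_of_nonneg (le_trans hlog2pos.le (hflog2 i)),
        abs_of_nonneg (Nat.cast_nonneg (ℓ i))] at hi
      have hb1 : (m i : ℝ) * Real.log 2 ≤ f i := by
        calc (m i : ℝ) * Real.log 2 ≤ (m i : ℝ) * Real.log (q i) :=
              mul_le_mul_of_nonneg_left (hlogq i) (by positivity)
          _ = 1 * ((m i : ℝ) * Real.log (q i)) := by ring
          _ ≤ ((n i - m i : ℕ) : ℝ) * ((m i : ℝ) * Real.log (q i)) := by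
              refine mul_le_mul_of_nonneg_right (hnm1 i) ?_
              have := hm1R i
              have := hlogq0 i
              positivity
          _ = f i := by rw [hf]; ring
      have hb2 : (((m i + 1) * (n i - m i) : ℕ) : ℝ) * Real.log (q i) ≤ 2 * f i := by
        have hcast : (((m i + 1) * (n i - m i) : ℕ) : ℝ)
            = ((m i : ℝ) + 1) * ((n i - m i : ℕ) : ℝ) := by push_cast; ring
        rw [hcast, hf]
        have h2m : (m i : ℝ) + 1 ≤ 2 * (m i : ℝ) := by linarith [hm1R i]
        have hnm0 : (0:ℝ) ≤ ((n i - m i : ℕ) : ℝ) := Nat.cast_nonneg _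
        calc ((m i : ℝ) + 1) * ((n i - m i : ℕ) : ℝ) * Real.log (q i)
            ≤ 2 * (m i : ℝ) * ((n i - m i : ℕ) : ℝ) * Real.log (q i) := by
              refine mul_le_mul_of_nonneg_right (mul_le_mul_of_nonneg_right h2m hnm0) (hlogq0 i)
          _ = 2 * (((n i - m i : ℕ) : ℝ) * (m i : ℝ) * Real.log (q i)) := by ring
      have hb3 : (ℓ i : ℝ) * Real.log (1 - ε') + ε' * (ℓ i : ℝ) = -(c₁ * (ℓ i : ℝ)) := by
        rw [hc₁def]; ring
      have : g i ≤ 3 * f i - c₁ * (ℓ i : ℝ) := by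
        rw [hg]
        dsimp only
        linarith [hb1, hb2, hb3]
      have h3f : 3 * f i ≤ (c₁ / 2) * (ℓ i : ℝ) := by linarith
      calc g i ≤ 3 * f i - c₁ * (ℓ i : ℝ) := this
        _ ≤ (c₁/2) * (ℓ i : ℝ) - c₁ * (ℓ i : ℝ) := by linarith
        _ = (ℓ i : ℝ) * (-(c₁/2)) := by ring
    have hgbot : Tendsto g atTop atBot :=
      tendsto_atBot_mono' atTop hgev
        (hℓinf.atTop_mul_const_of_neg (by linarith : -(c₁/2) < 0))
    have hulim : Tendsto (fun i => Real.exp (g i)) atTop (nhds 0) :=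
      Real.tendsto_exp_atBot.comp hgbot
    refine tendsto_of_tendsto_of_tendsto_of_le_of_le tendsto_const_nhds hulim
      (fun i => pr_nonneg (hθ i).1 (hθ i).2 _) hPu
  · -- lower branch
    intro hθb
    have hε1 : (0:ℝ) < 1 + ε := by linarith
    have hc₂ : 0 < ε - Real.log (1 + ε) := by
      have := Real.log_lt_sub_one_of_pos hε1 (by linarith : (1:ℝ) + ε ≠ 1)
      linarith
    set L : ℕ → ℝ := fun i => 1 - (1 + ε) ^ (ℓ i - 1) * Real.exp (-(ε * (ℓ i : ℝ))) with hL
    have hLP : ∀ i, L i ≤ prRandomSubset (Finset.univ : Finset (Fin (n i) → F i)) (θ i)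
        (fun A => ExistsRichFlat (F i) (m i) (ℓ i) A) := by
      intro i
      refine lower_bound_main (hθ i).1 (hθ i).2 hε
        (by rw [hfinrank i]; exact (hm i).2.le) ?_
      rw [hq i]
      have h2 := mul_le_mul_of_nonneg_right (hθb i) (hqmpos i).le
      rwa [div_mul_cancel₀ _ (ne_of_gt (hqmpos i))] at h2
    have hP1 : ∀ i, prRandomSubset (Finset.univ : Finset (Fin (n i) → F i)) (θ i)
        (fun A => ExistsRichFlat (F i) (m i) (ℓ i) A) ≤ 1 :=
      fun i => pr_le_one (hθ i).1 (hθ i).2 _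
    have hterm : Tendsto (fun i => (1 + ε) ^ (ℓ i - 1) * Real.exp (-(ε * (ℓ i : ℝ))))
        atTop (nhds 0) := by
      have hbound : ∀ i, (1 + ε) ^ (ℓ i - 1) * Real.exp (-(ε * (ℓ i : ℝ)))
          ≤ Real.exp ((ℓ i : ℝ) * (-(ε - Real.log (1 + ε)))) := by
        intro i
        rw [pow_eq_exp hε1, ← Real.exp_add]
        apply Real.exp_le_exp.mpr
        have hcast : ((ℓ i - 1 : ℕ) : ℝ) ≤ (ℓ i : ℝ) :=
          Nat.cast_le.mpr (Nat.sub_le _ _)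
        have hlog : 0 ≤ Real.log (1 + ε) := Real.log_nonneg (by linarith)
        have := mul_le_mul_of_nonneg_right hcast hlog
        nlinarith
      have hnn : ∀ i, 0 ≤ (1 + ε) ^ (ℓ i - 1) * Real.exp (-(ε * (ℓ i : ℝ))) :=
        fun i => mul_nonneg (pow_nonneg hε1.le _) (Real.exp_nonneg _)
      have hexp : Tendsto (fun i => Real.exp ((ℓ i : ℝ) * (-(ε - Real.log (1 + ε)))))
          atTop (nhds 0) :=
        Real.tendsto_exp_atBot.comp
          (hℓinf.atTop_mul_const_of_neg (by linarith : -(ε - Real.log (1 + ε)) < 0))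
      exact tendsto_of_tendsto_of_tendsto_of_le_of_le tendsto_const_nhds hexp hnn hbound
    have hLlim : Tendsto L atTop (nhds 1) := by
      have h1 : Tendsto (fun _ : ℕ => (1:ℝ)) atTop (nhds 1) := tendsto_const_nhds
      have := h1.sub hterm
      simpa using this
    exact tendsto_of_tendsto_of_tendsto_of_le_of_le hLlim tendsto_const_nhds hLP hP1
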